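/- arXiv:2410.02464 — 3 statements merged into one kernel-verified Lean document; each statement's English description precedes it below -/
import Mathlib

section
/- Every timed language accepted by a one-clock integer-reset timed automaton (1-IRTA) is also accepted by a strict 1-IRTA whose maximal constant appearing in guards is no greater than that of the original automaton; moreover, if the original 1-IRTA is deterministic, the strict 1-IRTA can be chosen deterministic. -/
open scoped NNReal Classical

namespace IRTA

/-- A timestamp is a finite sequence of non-negative reals. -/
abbrev Timestamp : Type := List ℝ≥0

/-- A timed word is a finite sequence of (delay, letter) pairs. -/
abbrev TimedWord (A : Type) : Type := List (ℝ≥0 × A)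

/-- Fractional part of a non-negative real. -/
noncomputable def fracPart (x : ℝ≥0) : ℝ≥0 := x - (⌊x⌋₊ : ℝ≥0)

/-- `x` is a natural-number value. -/
def IsNatVal (x : ℝ≥0) : Prop := ∃ m : ℕ, x = (m : ℝ≥0)

/-- Region equivalence `≡^K`. -/
def RegEq (K : ℕ) (x y : ℝ≥0) : Prop :=
  (⌊x⌋₊ = ⌊y⌋₊ ∧ (fracPart x = 0 ↔ fracPart y = 0)) ∨ ((K : ℝ≥0) < x ∧ (K : ℝ≥0) < y)

/-- One step of the (greedy) clock evolution: reset whenever the value is an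
integer between `0` and `K`. -/
noncomputable def resetStep (K : ℕ) (v : ℝ≥0) : ℝ≥0 :=
  if ∃ m : ℕ, m ≤ K ∧ v = (m : ℝ≥0) then 0 else v

/-- Auxiliary function computing `c^K` with accumulator `v`. -/
noncomputable def cKAux (K : ℕ) : ℝ≥0 → Timestamp → ℝ≥0
  | v, [] => v
  | v, t :: d => cKAux K (resetStep K (v + t)) d

/-- `c^K(d)`: the sum of the delays after the last integral position of `d`. -/
noncomputable def cK (K : ℕ) (d : Timestamp) : ℝ≥0 := cKAux K 0 d

/-- `c^K` of a timed word is `c^K` of its timestamp. -/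
noncomputable def cKW {A : Type} (K : ℕ) (w : TimedWord A) : ℝ≥0 :=
  cK K (w.map Prod.fst)

/-- `c^K_⊤` : `c^K` truncated at `K`. -/
noncomputable def cKTop {A : Type} (K : ℕ) (w : TimedWord A) : WithTop ℝ≥0 :=
  if cKW K w ≤ (K : ℝ≥0) then ((cKW K w : ℝ≥0) : WithTop ℝ≥0) else ⊤

/-! ### Clock constraints and one-clock timed automata -/

/-- Clock constraints `φ ::= x < m | m < x | x = m | φ ∧ φ`. -/
inductive CC : Type where
  | lt : ℕ → CC
  | gt : ℕ → CC
  | eq : ℕ → CC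
  | and : CC → CC → CC

/-- Satisfaction of a clock constraint by a clock value. -/
def CC.sat : CC → ℝ≥0 → Prop
  | .lt m, x => x < (m : ℝ≥0)
  | .gt m, x => (m : ℝ≥0) < x
  | .eq m, x => x = (m : ℝ≥0)
  | .and φ ψ, x => φ.sat x ∧ ψ.sat x

/-- The largest constant appearing in a clock constraint. -/
def CC.maxConst : CC → ℕ
  | .lt m => m
  | .gt m => m
  | .eq m => m
  | .and φ ψ => max φ.maxConst ψ.maxConst

/-- A transition of a one-clock timed automaton; `reset = true` means the
clock is reset (the `r = 0` case). -/
structure TTrans (Q A : Type) where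
  src : Q
  dst : Q
  lab : A
  guard : CC
  reset : Bool

/-- A one-clock timed automaton. -/
structure TA (A : Type) where
  Q : Type
  init : Q
  final : Set Q
  trans : Set (TTrans Q A)

/-- The automaton has finitely many states and transitions. -/
def TA.IsFinite {A : Type} (M : TA A) : Prop := Finite M.Q ∧ M.trans.Finite

/-- Runs of a one-clock timed automaton between configurations. -/
inductive Steps {A : Type} (M : TA A) : M.Q × ℝ≥0 → TimedWord A → M.Q × ℝ≥0 → Prop
  | nil (c : M.Q × ℝ≥0) : Steps M c [] c
  | cons {q : M.Q} {ν t : ℝ≥0} {a : A} {w : TimedWord A} {c : M.Q × ℝ≥0}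
      (θ : TTrans M.Q A) (hθ : θ ∈ M.trans) (hsrc : θ.src = q) (hlab : θ.lab = a)
      (hg : θ.guard.sat (ν + t))
      (hrest : Steps M (θ.dst, if θ.reset then 0 else ν + t) w c) :
      Steps M (q, ν) ((t, a) :: w) c

/-- The language of `M` from a given configuration. -/
def TA.LangFrom {A : Type} (M : TA A) (c : M.Q × ℝ≥0) : Set (TimedWord A) :=
  {w | ∃ q' : M.Q, ∃ ν' : ℝ≥0, Steps M c w (q', ν') ∧ q' ∈ M.final}

/-- The language of `M` (from the initial configuration). -/
def TA.Lang {A : Type} (M : TA A) : Set (TimedWord A) := M.LangFrom (M.init, 0)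

/-- Determinism: distinct transitions with the same source and letter have
disjoint guards. -/
def TA.Deterministic {A : Type} (M : TA A) : Prop :=
  ∀ θ₁ ∈ M.trans, ∀ θ₂ ∈ M.trans, θ₁ ≠ θ₂ → θ₁.src = θ₂.src → θ₁.lab = θ₂.lab →
    ∀ x : ℝ≥0, ¬ (θ₁.guard.sat x ∧ θ₂.guard.sat x)

/-- Completeness: every timed word admits a run from the initial configuration. -/
def TA.Complete {A : Type} (M : TA A) : Prop :=
  ∀ w : TimedWord A, ∃ c : M.Q × ℝ≥0, Steps M (M.init, 0) w c

/-- A 1-IRTA: every resetting transition has an equality guard. -/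
def TA.IsIRTA {A : Type} (M : TA A) : Prop :=
  ∀ θ ∈ M.trans, θ.reset = true → ∃ m : ℕ, θ.guard = CC.eq m

/-- Guards allowed in a strict 1-IRTA with constant `K`. -/
def StrictGuard (K : ℕ) (φ : CC) : Prop :=
  (∃ m : ℕ, φ = CC.eq m) ∨ (∃ m : ℕ, φ = CC.and (CC.gt m) (CC.lt (m + 1))) ∨ φ = CC.gt K

/-- Strictness with constant `K`: every guard is of one of the allowed forms
and a guard is an equality iff the transition resets. -/
def TA.IsStrict {A : Type} (M : TA A) (K : ℕ) : Prop :=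
  ∀ θ ∈ M.trans, StrictGuard K θ.guard ∧ ((∃ m : ℕ, θ.guard = CC.eq m) ↔ θ.reset = true)

/-- All constants appearing in guards are at most `K`. -/
def TA.MaxConstLE {A : Type} (M : TA A) (K : ℕ) : Prop :=
  ∀ θ ∈ M.trans, θ.guard.maxConst ≤ K

/-- `M` reaches the same control state on reading `u` and `v` from the initial
configuration. -/
def TA.SameState {A : Type} (M : TA A) (u v : TimedWord A) : Prop :=
  ∃ q : M.Q, ∃ ν ν' : ℝ≥0, Steps M (M.init, 0) u (q, ν) ∧ Steps M (M.init, 0) v (q, ν')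

/-- A `K`-acceptor. -/
def IsKAcceptor {A : Type} (M : TA A) (K : ℕ) : Prop :=
  M.IsFinite ∧ M.Complete ∧ M.Deterministic ∧ M.IsIRTA ∧ M.IsStrict K ∧ M.MaxConstLE K ∧
    ∀ u v : TimedWord A, M.SameState u v → RegEq K (cKW K u) (cKW K v)

/-! ### Equivalences on timed words -/

/-- `L`-preservation of a relation on timed words. -/
def LPreserving {A : Type} (L : Set (TimedWord A)) (r : TimedWord A → TimedWord A → Prop) :
    Prop :=
  ∀ u v : TimedWord A, r u v → (u ∈ L ↔ v ∈ L)

/-- `K`-monotonicity of a relation on timed words. -/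
def KMonotonic {A : Type} (K : ℕ) (r : TimedWord A → TimedWord A → Prop) : Prop :=
  ∀ u v : TimedWord A, r u v →
    RegEq K (cKW K u) (cKW K v) ∧
      ∀ (a : A) (t t' : ℝ≥0), RegEq K (cKW K u + t) (cKW K v + t') →
        r (u ++ [(t, a)]) (v ++ [(t', a)])

/-- Finite index: there are finitely many classes `{v | r u v}`. -/
def FiniteIndex {A : Type} (r : TimedWord A → TimedWord A → Prop) : Prop :=
  Set.Finite (Set.range fun u : TimedWord A => {v : TimedWord A | r u v})

/-! ### The rescaling maps -/

/-- The bijection `f_{λ→λ'}` of the open unit interval. -/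
noncomputable def fScale (lam lam' t : ℝ≥0) : ℝ≥0 :=
  if t ≤ lam then (lam' / lam) * t else lam' + ((1 - lam') / (1 - lam)) * (t - lam)

/-- The new delay `t'` computed from the current clock values `y, y'` and delay `t`. -/
noncomputable def tauStep (K : ℕ) (y y' t : ℝ≥0) : ℝ≥0 :=
  if (IsNatVal y ∧ IsNatVal y') ∨ ((K : ℝ≥0) < y ∧ (K : ℝ≥0) < y') then t
  else (⌊t⌋₊ : ℝ≥0) + fScale (1 - fracPart y) (1 - fracPart y') (fracPart t)

/-- Auxiliary rescaling map on timestamps, carrying the current clock values. -/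
noncomputable def tauAux (K : ℕ) : ℝ≥0 → ℝ≥0 → Timestamp → Timestamp
  | _, _, [] => []
  | y, y', t :: d =>
      tauStep K y y' t ::
        tauAux K (resetStep K (y + t)) (resetStep K (y' + tauStep K y y' t)) d

/-- The rescaling map `τ_{x→x'}` on timestamps. -/
noncomputable def tau (K : ℕ) (x x' : ℝ≥0) (d : Timestamp) : Timestamp :=
  tauAux K (resetStep K x) (resetStep K x') d

/-- Auxiliary rescaling map on timed words. -/
noncomputable def tauWAux {A : Type} (K : ℕ) : ℝ≥0 → ℝ≥0 → TimedWord A → TimedWord A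
  | _, _, [] => []
  | y, y', (t, a) :: w =>
      (tauStep K y y' t, a) ::
        tauWAux K (resetStep K (y + t)) (resetStep K (y' + tauStep K y y' t)) w

/-- The rescaling map `τ_{x→x'}` on timed words. -/
noncomputable def tauW {A : Type} (K : ℕ) (x x' : ℝ≥0) (w : TimedWord A) : TimedWord A :=
  tauWAux K (resetStep K x) (resetStep K x') w

/-! ### Residuals and the syntactic equivalence -/

/-- The residual language `u^{-1}L`. -/
def residual {A : Type} (L : Set (TimedWord A)) (u : TimedWord A) : Set (TimedWord A) :=
  {w : TimedWord A | u ++ w ∈ L}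

/-- The syntactic equivalence `≈^{L,K}`. -/
def ApproxLK {A : Type} (L : Set (TimedWord A)) (K : ℕ) (u v : TimedWord A) : Prop :=
  RegEq K (cKW K u) (cKW K v) ∧
    (tauW K (cKW K u) (cKW K v)) '' (residual L u) = residual L v

/-! ### The automaton built from a monotonic equivalence -/

/-- The region guard `φ([t])`. -/
noncomputable def phiOf (K : ℕ) (t : ℝ≥0) : CC :=
  if t ≤ (K : ℝ≥0) then
    (if IsNatVal t then CC.eq ⌊t⌋₊ else CC.and (CC.gt ⌊t⌋₊) (CC.lt (⌊t⌋₊ + 1)))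
  else CC.gt K

/-- The automaton `A_≈` built from an equivalence `s` on timed words. -/
noncomputable def Aapprox {A : Type} (L : Set (TimedWord A)) (K : ℕ)
    (s : Setoid (TimedWord A)) : TA A where
  Q := Quotient s
  init := Quotient.mk s ([] : TimedWord A)
  final := {q : Quotient s | ∃ u : TimedWord A, q = Quotient.mk s u ∧ u ∈ L}
  trans := {θ : TTrans (Quotient s) A |
    ∃ (u : TimedWord A) (a : A) (t : ℝ≥0),
      θ.src = Quotient.mk s u ∧ θ.dst = Quotient.mk s (u ++ [(t, a)]) ∧ θ.lab = a ∧
      θ.guard = phiOf K (cKW K u + t) ∧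
      (θ.reset = true ↔ ∃ m : ℕ, m ≤ K ∧ cKW K u + t = (m : ℝ≥0))}

/-! ### Half-integral and small words -/

/-- Every delay has fractional part `0` or `1/2`. -/
def HalfIntegral {A : Type} (w : TimedWord A) : Prop :=
  ∀ p ∈ w, fracPart p.1 = 0 ∨ fracPart p.1 = 1 / 2

/-- Every delay is `< K + 1`. -/
def SmallWord {A : Type} (K : ℕ) (w : TimedWord A) : Prop :=
  ∀ p ∈ w, p.1 < (K : ℝ≥0) + 1

/-- The delays of `Σ_K`: half-integral values `≤ K + 1/2`. -/
def IsSigmaK (K : ℕ) (t : ℝ≥0) : Prop :=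
  (fracPart t = 0 ∨ fracPart t = 1 / 2) ∧ t ≤ (K : ℝ≥0) + 1 / 2

/-- Words over `Σ_K` (small half-integral words). -/
def SigmaWord {A : Type} (K : ℕ) (w : TimedWord A) : Prop :=
  ∀ p ∈ w, IsSigmaK K p.1



/-! ### `K`-acceptors with their region representatives -/

/-- A `K`-acceptor bundled with the half-integral representative of the
unique region of each state. -/
structure KAcc (A : Type) (K : ℕ) where
  M : TA A
  acc : IsKAcceptor M K
  reg : M.Q → ℝ≥0
  regHalf : ∀ q : M.Q, fracPart (reg q) = 0 ∨ fracPart (reg q) = 1 / 2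
  regLe : ∀ q : M.Q, reg q ≤ (K : ℝ≥0) + 1 / 2
  regSpec : ∀ (w : TimedWord A) (q : M.Q) (x : ℝ≥0),
    Steps M (M.init, 0) w (q, x) → RegEq K x (reg q)

/-- The minimization equivalences `∼^i` on the states of a `K`-acceptor. -/
def simEq {A : Type} {K : ℕ} (B : KAcc A K) : ℕ → B.M.Q → B.M.Q → Prop
  | 0, p, q => B.reg p = B.reg q ∧ (p ∈ B.M.final ↔ q ∈ B.M.final)
  | i + 1, p, q => simEq B i p q ∧
      ∀ (t : ℝ≥0) (a : A), IsSigmaK K t →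
        ∀ θ₁ θ₂ : TTrans B.M.Q A, θ₁ ∈ B.M.trans → θ₂ ∈ B.M.trans →
          θ₁.src = p → θ₂.src = q → θ₁.lab = a → θ₂.lab = a →
          θ₁.guard = phiOf K t → θ₂.guard = phiOf K t →
          simEq B i θ₁.dst θ₂.dst

/-- The quotient automaton `B/∼^m`. -/
noncomputable def quotTA {A : Type} {K : ℕ} (B : KAcc A K) (m : ℕ) : TA A where
  Q := Quot (simEq B m)
  init := Quot.mk (simEq B m) B.M.init
  final := {c : Quot (simEq B m) | ∃ q ∈ B.M.final, c = Quot.mk (simEq B m) q}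
  trans := {θ : TTrans (Quot (simEq B m)) A |
    ∃ θ₀ ∈ B.M.trans,
      θ.src = Quot.mk (simEq B m) θ₀.src ∧ θ.dst = Quot.mk (simEq B m) θ₀.dst ∧
      θ.lab = θ₀.lab ∧ θ.guard = θ₀.guard ∧ θ.reset = θ₀.reset}

/-! ### Observation tables -/

/-- An observation table over `Σ_K`. -/
structure ObsTable (A : Type) (K : ℕ) where
  U1 : Set (TimedWord A)
  E : Set (TimedWord A)
  val : TimedWord A → TimedWord A → Bool
  U1fin : U1.Finite
  Efin : E.Finite
  U1sigma : ∀ u ∈ U1, SigmaWord K u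
  Esigma : ∀ e ∈ E, SigmaWord K e
  epsU1 : ([] : TimedWord A) ∈ U1
  prefixClosed : ∀ (u : TimedWord A) (x : ℝ≥0 × A), u ++ [x] ∈ U1 → u ∈ U1
  epsE : ([] : TimedWord A) ∈ E
  suffixClosed : ∀ (x : ℝ≥0 × A) (e : TimedWord A), x :: e ∈ E → e ∈ E

/-- The set `U2` of one-letter `Σ_K`-extensions of `U1`. -/
def obsU2 {A : Type} {K : ℕ} (T : ObsTable A K) : Set (TimedWord A) :=
  {w : TimedWord A | ∃ u ∈ T.U1, ∃ (t : ℝ≥0) (a : A), IsSigmaK K t ∧ w = u ++ [(t, a)]}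

/-- `R(u)`: the row of `u` (restricted to `E`) together with `c^K_⊤(u)`. -/
noncomputable def Rof {A : Type} {K : ℕ} (T : ObsTable A K) (u : TimedWord A) :
    ({e : TimedWord A // e ∈ T.E} → Bool) × WithTop ℝ≥0 :=
  (fun e => T.val u e.1, cKTop K u)

/-- The table is closed. -/
def ObsTable.Closed {A : Type} {K : ℕ} (T : ObsTable A K) : Prop :=
  ∀ w ∈ obsU2 T, ∃ u ∈ T.U1, Rof T w = Rof T u

/-- The table is consistent. -/
def ObsTable.Consistent {A : Type} {K : ℕ} (T : ObsTable A K) : Prop :=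
  ∀ u ∈ T.U1, ∀ w ∈ T.U1, Rof T u = Rof T w →
    ∀ (t : ℝ≥0) (a : A), IsSigmaK K t → Rof T (u ++ [(t, a)]) = Rof T (w ++ [(t, a)])

/-- The automaton `A_𝒯` induced by a (closed and consistent) observation table. -/
noncomputable def ATable {A : Type} {K : ℕ} (T : ObsTable A K) : TA A where
  Q := {f : ({e : TimedWord A // e ∈ T.E} → Bool) × WithTop ℝ≥0 // ∃ u ∈ T.U1, f = Rof T u}
  init := ⟨Rof T [], ⟨[], T.epsU1, rfl⟩⟩
  final := {q | ∃ u ∈ T.U1, q.1 = Rof T u ∧ T.val u [] = true}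
  trans := {θ | ∃ u ∈ T.U1, ∃ (t : ℝ≥0) (a : A), IsSigmaK K t ∧
      θ.src.1 = Rof T u ∧ θ.dst.1 = Rof T (u ++ [(t, a)]) ∧ θ.lab = a ∧
      θ.guard = phiOf K (cKW K u + t) ∧
      (θ.reset = true ↔ ∃ m : ℕ, m ≤ K ∧ cKW K u + t = (m : ℝ≥0))}

/-- A `K`-acceptor is consistent with the observation table `𝒯`. -/
def ConsistentWith {A : Type} {K : ℕ} (M : TA A) (T : ObsTable A K) : Prop :=
  ∀ w : TimedWord A, (w ∈ T.U1 ∨ w ∈ obsU2 T) → ∀ e ∈ T.E,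
    ∀ (q : M.Q) (ν : ℝ≥0), Steps M (M.init, 0) (w ++ e) (q, ν) →
      (q ∈ M.final ↔ T.val w e = true)

/-- Isomorphism of one-clock timed automata. -/
structure TAIso {A : Type} (M N : TA A) where
  toEquiv : M.Q ≃ N.Q
  init_eq : toEquiv M.init = N.init
  final_iff : ∀ q : M.Q, q ∈ M.final ↔ toEquiv q ∈ N.final
  trans_iff : ∀ θ : TTrans M.Q A,
    θ ∈ M.trans ↔
      (⟨toEquiv θ.src, toEquiv θ.dst, θ.lab, θ.guard, θ.reset⟩ : TTrans N.Q A) ∈ N.trans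


/-! ### Auxiliary material for Statement 0 -/

section Statement0Aux

variable {A : Type}

lemma fracPart_eq_zero_iff {x : ℝ≥0} : fracPart x = 0 ↔ x = (⌊x⌋₊ : ℝ≥0) := by
  unfold fracPart
  rw [tsub_eq_zero_iff_le]
  exact ⟨fun h => le_antisymm h (Nat.floor_le (zero_le : 0 ≤ x)), fun h => h.le⟩

lemma isNatVal_iff_frac {x : ℝ≥0} : IsNatVal x ↔ fracPart x = 0 := by
  rw [fracPart_eq_zero_iff]
  refine ⟨?_, fun h => ⟨_, h⟩⟩
  rintro ⟨m, rfl⟩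
  rw [Nat.floor_natCast]

lemma lt_nat_iff_floor {x : ℝ≥0} {m : ℕ} : x < (m : ℝ≥0) ↔ ⌊x⌋₊ < m :=
  (Nat.floor_lt (zero_le : 0 ≤ x)).symm

lemma eq_nat_iff_floor {x : ℝ≥0} {m : ℕ} :
    x = (m : ℝ≥0) ↔ (⌊x⌋₊ = m ∧ fracPart x = 0) := by
  constructor
  · rintro rfl
    exact ⟨Nat.floor_natCast m, isNatVal_iff_frac.mp ⟨m, rfl⟩⟩
  · rintro ⟨h1, h2⟩
    rw [fracPart_eq_zero_iff] at h2
    rw [h2, h1]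

lemma sat_congr {φ : CC} {x y : ℝ≥0} (hf : ⌊x⌋₊ = ⌊y⌋₊)
    (hz : fracPart x = 0 ↔ fracPart y = 0) : φ.sat x ↔ φ.sat y := by
  induction φ with
  | lt m => simp only [CC.sat, lt_nat_iff_floor, hf]
  | gt m =>
      have key : ∀ z : ℝ≥0, ((m : ℝ≥0) < z ↔ ¬ (z < (m : ℝ≥0) ∨ z = (m : ℝ≥0))) := by
        intro z
        rw [← le_iff_lt_or_eq, not_le]
      simp only [CC.sat]
      rw [key, key, lt_nat_iff_floor, lt_nat_iff_floor, eq_nat_iff_floor, eq_nat_iff_floor, hf]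
      tauto
  | eq m =>
      simp only [CC.sat]
      rw [eq_nat_iff_floor, eq_nat_iff_floor, hf]
      tauto
  | and φ ψ ihφ ihψ => simp only [CC.sat, ihφ, ihψ]

lemma sat_gtK {φ : CC} {K : ℕ} (hm : φ.maxConst ≤ K) {x y : ℝ≥0}
    (hx : (K : ℝ≥0) < x) (hy : (K : ℝ≥0) < y) : φ.sat x ↔ φ.sat y := by
  induction φ with
  | lt m =>
      have hmK : (m : ℝ≥0) ≤ K := Nat.cast_le.mpr hm
      simp only [CC.sat]
      exact iff_of_false (not_lt.mpr (hmK.trans hx.le)) (not_lt.mpr (hmK.trans hy.le))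
  | gt m =>
      have hmK : (m : ℝ≥0) ≤ K := Nat.cast_le.mpr hm
      simp only [CC.sat]
      exact iff_of_true (hmK.trans_lt hx) (hmK.trans_lt hy)
  | eq m =>
      have hmK : (m : ℝ≥0) ≤ K := Nat.cast_le.mpr hm
      simp only [CC.sat]
      constructor <;> rintro rfl
      · exact absurd hx (not_lt.mpr hmK)
      · exact absurd hy (not_lt.mpr hmK)
  | and φ ψ ihφ ihψ =>
      simp only [CC.maxConst, max_le_iff] at hm
      simp only [CC.sat, ihφ hm.1, ihψ hm.2]

lemma sat_of_regEq {φ : CC} {K : ℕ} (hm : φ.maxConst ≤ K) {x y : ℝ≥0}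
    (h : RegEq K x y) : φ.sat x ↔ φ.sat y := by
  rcases h with ⟨hf, hz⟩ | ⟨hx, hy⟩
  · exact sat_congr hf hz
  · exact sat_gtK hm hx hy

lemma regEq_symm {K : ℕ} {x y : ℝ≥0} (h : RegEq K x y) : RegEq K y x := by
  rcases h with ⟨hf, hz⟩ | ⟨hx, hy⟩
  · exact Or.inl ⟨hf.symm, hz.symm⟩
  · exact Or.inr ⟨hy, hx⟩

lemma fracPart_add_nat (x : ℝ≥0) (m : ℕ) : fracPart (x + m) = fracPart x := by
  unfold fracPart
  rw [Nat.floor_add_natCast (zero_le : 0 ≤ x), Nat.cast_add]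
  exact add_tsub_add_eq_tsub_right x (m : ℝ≥0) _

lemma regEq_add_nat {K : ℕ} {x y : ℝ≥0} (m : ℕ) (h : RegEq K x y) :
    RegEq K (x + m) (y + m) := by
  rcases h with ⟨hf, hz⟩ | ⟨hx, hy⟩
  · left
    refine ⟨?_, ?_⟩
    · rw [Nat.floor_add_natCast (zero_le : 0 ≤ x), Nat.floor_add_natCast (zero_le : 0 ≤ y), hf]
    · rw [fracPart_add_nat, fracPart_add_nat]; exact hz
  · exact Or.inr ⟨hx.trans_le le_self_add, hy.trans_le le_self_add⟩

lemma regEq_gtK_iff {K : ℕ} {x y : ℝ≥0} (h : RegEq K x y) :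
    ((K : ℝ≥0) < x ↔ (K : ℝ≥0) < y) := by
  rcases h with ⟨hf, hz⟩ | ⟨hx, hy⟩
  · simpa only [CC.sat] using sat_congr (φ := CC.gt K) hf hz
  · exact iff_of_true hx hy

lemma phiOf_sat_self (K : ℕ) (w : ℝ≥0) : (phiOf K w).sat w := by
  unfold phiOf
  split_ifs with h1 h2
  · obtain ⟨m, rfl⟩ := h2
    simp only [CC.sat, Nat.floor_natCast]
  · simp only [CC.sat]
    refine ⟨?_, ?_⟩
    · rcases lt_or_eq_of_le (Nat.floor_le (zero_le : 0 ≤ w)) with h | h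
      · exact h
      · exact absurd ⟨⌊w⌋₊, h.symm⟩ h2
    · exact_mod_cast Nat.lt_floor_add_one w
  · simpa only [CC.sat] using not_le.mp h1

lemma regEq_of_phiOf_sat {K : ℕ} {w z : ℝ≥0} (h : (phiOf K w).sat z) : RegEq K z w := by
  unfold phiOf at h
  split_ifs at h with h1 h2
  · obtain ⟨m, rfl⟩ := h2
    simp only [CC.sat, Nat.floor_natCast] at h
    subst h
    exact Or.inl ⟨rfl, Iff.rfl⟩
  · simp only [CC.sat] at h
    obtain ⟨hlo, hhi⟩ := h
    have hzf : ⌊z⌋₊ = ⌊w⌋₊ := by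
      rw [Nat.floor_eq_iff (zero_le : 0 ≤ z)]
      refine ⟨hlo.le, ?_⟩
      exact_mod_cast hhi
    left
    refine ⟨hzf, ?_⟩
    have hwz : fracPart w ≠ 0 := fun hc => h2 (isNatVal_iff_frac.mpr hc)
    have hzz : fracPart z ≠ 0 := by
      intro hc
      rw [fracPart_eq_zero_iff] at hc
      have hz' : z = (⌊w⌋₊ : ℝ≥0) := by rw [hc, hzf]
      rw [hz'] at hlo
      exact lt_irrefl _ hlo
    exact iff_of_false hzz hwz
  · simp only [CC.sat] at h
    exact Or.inr ⟨h, not_le.mp h1⟩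


lemma phiOf_sat_of_natval {K : ℕ} {w z : ℝ≥0} (h1 : IsNatVal w) (h2 : w ≤ (K : ℝ≥0))
    (h : (phiOf K w).sat z) : z = w := by
  obtain ⟨m, rfl⟩ := h1
  unfold phiOf at h
  rw [if_pos h2, if_pos ⟨m, rfl⟩] at h
  simp only [CC.sat, Nat.floor_natCast] at h
  exact h

lemma phiOf_congr {K : ℕ} {z w : ℝ≥0} (h : RegEq K z w) : phiOf K z = phiOf K w := by
  rcases h with ⟨hf, hz⟩ | ⟨h1, h2⟩
  · have hle : z ≤ (K : ℝ≥0) ↔ w ≤ (K : ℝ≥0) := by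
      rw [← not_lt, ← not_lt]
      exact not_congr (by simpa only [CC.sat] using sat_congr (φ := CC.gt K) hf hz)
    have hn : IsNatVal z ↔ IsNatVal w := by
      rw [isNatVal_iff_frac, isNatVal_iff_frac]; exact hz
    unfold phiOf
    by_cases hzK : z ≤ (K : ℝ≥0)
    · rw [if_pos hzK, if_pos (hle.mp hzK)]
      by_cases hnz : IsNatVal z
      · rw [if_pos hnz, if_pos (hn.mp hnz), hf]
      · rw [if_neg hnz, if_neg (fun hc => hnz (hn.mpr hc)), hf]
    · rw [if_neg hzK, if_neg (fun hc => hzK (hle.mpr hc))]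
  · unfold phiOf
    rw [if_neg (not_le.mpr h1), if_neg (not_le.mpr h2)]

lemma phiOf_eq_form {K : ℕ} {w : ℝ≥0} :
    (∃ j : ℕ, phiOf K w = CC.eq j) ↔ (IsNatVal w ∧ w ≤ (K : ℝ≥0)) := by
  unfold phiOf
  split_ifs with h1 h2
  · exact iff_of_true ⟨⌊w⌋₊, rfl⟩ ⟨h2, h1⟩
  · refine iff_of_false ?_ (fun hc => h2 hc.1)
    rintro ⟨j, hj⟩
    simp at hj
  · refine iff_of_false ?_ (fun hc => h1 hc.2)
    rintro ⟨j, hj⟩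
    simp at hj

lemma phiOf_strictGuard (K : ℕ) (w : ℝ≥0) : StrictGuard K (phiOf K w) := by
  unfold phiOf
  split_ifs with h1 h2
  · exact Or.inl ⟨_, rfl⟩
  · exact Or.inr (Or.inl ⟨_, rfl⟩)
  · exact Or.inr (Or.inr rfl)

lemma phiOf_maxConst (K : ℕ) (w : ℝ≥0) : (phiOf K w).maxConst ≤ K := by
  unfold phiOf
  split_ifs with h1 h2
  · simp only [CC.maxConst]
    have h := Nat.floor_le_floor h1
    rwa [Nat.floor_natCast] at h
  · have hwK : w < (K : ℝ≥0) := lt_of_le_of_ne h1 (fun hc => h2 ⟨K, hc⟩)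
    have hfl : ⌊w⌋₊ < K := lt_nat_iff_floor.mp hwK
    simp only [CC.maxConst, max_le_iff]
    omega
  · simp only [CC.maxConst, le_refl]

lemma natval_of_add_nat_eq {x : ℝ≥0} {K m n : ℕ} (hnK : n ≤ K)
    (h : x + (m : ℝ≥0) = (n : ℝ≥0)) :
    x = ((n - m : ℕ) : ℝ≥0) ∧ x ≤ (K : ℝ≥0) := by
  have hm : m ≤ n := by
    have : (m : ℝ≥0) ≤ (n : ℝ≥0) := by rw [← h]; exact le_add_self
    exact_mod_cast this
  have hx : x = ((n - m : ℕ) : ℝ≥0) := by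
    have hc : ((n - m : ℕ) : ℝ≥0) + (m : ℝ≥0) = (n : ℝ≥0) := by
      rw [← Nat.cast_add]
      congr 1
      omega
    exact add_right_cancel (h.trans hc.symm)
  refine ⟨hx, ?_⟩
  rw [hx]
  exact_mod_cast (by omega : n - m ≤ K)

lemma exn_transfer {K : ℕ} {a b : ℝ≥0} (h : RegEq K a b) {n : Fin (K+1)}
    (ha : a = (n.1 : ℝ≥0)) : b = (n.1 : ℝ≥0) := by
  rcases h with ⟨hf, hz⟩ | ⟨h1, _⟩
  · have hfa : fracPart a = 0 := isNatVal_iff_frac.mp ⟨n.1, ha⟩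
    have hfb : fracPart b = 0 := hz.mp hfa
    rw [fracPart_eq_zero_iff] at hfb
    have hfl : ⌊a⌋₊ = n.1 := by rw [ha, Nat.floor_natCast]
    rw [hfb, ← hf, hfl]
  · exfalso
    have hn : (n.1 : ℝ≥0) ≤ (K : ℝ≥0) := by
      exact_mod_cast Nat.lt_succ_iff.mp n.2
    rw [ha] at h1
    exact absurd h1 (not_lt.mpr hn)

lemma not_intcond_of {x : ℝ≥0} {K : ℕ} {m : Fin (K+1)}
    (hnn : ¬ ∃ n : Fin (K+1), x + (m.1 : ℝ≥0) = (n.1 : ℝ≥0))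
    (hle : x + (m.1 : ℝ≥0) ≤ (K : ℝ≥0)) :
    ¬ (IsNatVal x ∧ x ≤ (K : ℝ≥0)) := by
  rintro ⟨⟨j, rfl⟩, -⟩
  have hjm : ((j + m.1 : ℕ) : ℝ≥0) = (j : ℝ≥0) + (m.1 : ℝ≥0) := by push_cast; ring
  have hle' : j + m.1 ≤ K := by
    have : ((j + m.1 : ℕ) : ℝ≥0) ≤ (K : ℝ≥0) := by rw [hjm]; exact hle
    exact_mod_cast this
  exact hnn ⟨⟨j + m.1, by omega⟩, hjm.symm⟩

/-- Destination specification for the strictification construction. -/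
abbrev DBranch {Q : Type} (K : ℕ) (θ : TTrans Q A) (m : Fin (K+1)) (w : ℝ≥0)
    (d : Q × Option (Fin (K+1))) : Prop :=
  (θ.reset = true ∧ d = (θ.dst, some ⟨0, K.succ_pos⟩)) ∨
  (θ.reset = false ∧ ∃ n : Fin (K+1), w + (m.1 : ℝ≥0) = (n.1 : ℝ≥0) ∧ d = (θ.dst, some n)) ∨
  (θ.reset = false ∧ ¬ (∃ n : Fin (K+1), w + (m.1 : ℝ≥0) = (n.1 : ℝ≥0)) ∧
      w + (m.1 : ℝ≥0) ≤ (K : ℝ≥0) ∧ d = (θ.dst, some m)) ∨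
  (θ.reset = false ∧ (K : ℝ≥0) < w + (m.1 : ℝ≥0) ∧ d = (θ.dst, none))

/-- The transitions of the strictification derived from an original transition. -/
abbrev Derived (M : TA A) (K : ℕ) (θ : TTrans M.Q A)
    (θ' : TTrans (M.Q × Option (Fin (K+1))) A) : Prop :=
  θ'.lab = θ.lab ∧ ∃ w : ℝ≥0, θ'.guard = phiOf K w ∧
    θ'.reset = (if IsNatVal w ∧ w ≤ (K : ℝ≥0) then true else false) ∧
    ((∃ m : Fin (K+1), θ'.src = (θ.src, some m) ∧ θ.guard.sat (w + (m.1 : ℝ≥0)) ∧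
        DBranch K θ m w θ'.dst) ∨
      (θ'.src = (θ.src, none) ∧ θ.guard.sat ((K : ℝ≥0) + 1) ∧ θ'.dst = (θ.dst, none)))

/-- The strictification of a 1-IRTA. -/
noncomputable def strictify (M : TA A) (K : ℕ) : TA A where
  Q := M.Q × Option (Fin (K+1))
  init := (M.init, some ⟨0, K.succ_pos⟩)
  final := {p | p.1 ∈ M.final}
  trans := {θ' | ∃ θ ∈ M.trans, Derived M K θ θ'}

/-- The simulation relation between configurations. -/
abbrev Rel (M : TA A) (K : ℕ) (c : M.Q × ℝ≥0)
    (c' : (M.Q × Option (Fin (K+1))) × ℝ≥0) : Prop :=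
  c'.1.1 = c.1 ∧
    ((∃ m : Fin (K+1), c'.1.2 = some m ∧ c.2 = c'.2 + (m.1 : ℝ≥0)) ∨
      (c'.1.2 = none ∧ (K : ℝ≥0) < c.2))

lemma strictify_strict (M : TA A) (K : ℕ) : (strictify M K).IsStrict K := by
  rintro θ' ⟨θ, hθ, hlab, w, hguard, hreset, hbr⟩
  refine ⟨hguard ▸ phiOf_strictGuard K w, ?_⟩
  rw [hguard, hreset, phiOf_eq_form]
  by_cases h : IsNatVal w ∧ w ≤ (K : ℝ≥0) <;> simp [h]

lemma strictify_irta (M : TA A) (K : ℕ) : (strictify M K).IsIRTA :=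
  fun θ' hθ' hr => ((strictify_strict M K) θ' hθ').2.mpr hr

lemma strictify_maxConst (M : TA A) (K : ℕ) : (strictify M K).MaxConstLE K := by
  rintro θ' ⟨θ, hθ, hlab, w, hguard, -⟩
  rw [hguard]
  exact phiOf_maxConst K w

lemma strictify_finite [Finite A] {M : TA A} (hfin : M.IsFinite) (K : ℕ) :
    (strictify M K).IsFinite := by
  obtain ⟨hQ, hT⟩ := hfin
  haveI := hQ
  constructor
  · exact inferInstanceAs (Finite (M.Q × Option (Fin (K+1))))
  · have hGfin : {φ : CC | ∃ w : ℝ≥0, φ = phiOf K w}.Finite := by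
      have hsub : {φ : CC | ∃ w : ℝ≥0, φ = phiOf K w} ⊆
          insert (CC.gt K) (((fun j => CC.eq j) '' Set.Iic K) ∪
            ((fun j => CC.and (CC.gt j) (CC.lt (j+1))) '' Set.Iic K)) := by
        rintro φ ⟨w, rfl⟩
        simp only [Set.mem_insert_iff, Set.mem_union, Set.mem_image, Set.mem_Iic]
        unfold phiOf
        split_ifs with h1 h2
        · refine Or.inr (Or.inl ⟨⌊w⌋₊, ?_, rfl⟩)
          have h := Nat.floor_le_floor h1
          rwa [Nat.floor_natCast] at h
        · refine Or.inr (Or.inr ⟨⌊w⌋₊, ?_, rfl⟩)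
          have hwK : w < (K : ℝ≥0) := lt_of_le_of_ne h1 (fun hc => h2 ⟨K, hc⟩)
          exact (lt_nat_iff_floor.mp hwK).le
        · exact Or.inl rfl
      exact Set.Finite.subset
        (Set.Finite.insert _ (((Set.finite_Iic K).image _).union ((Set.finite_Iic K).image _)))
        hsub
    let f : TTrans (M.Q × Option (Fin (K+1))) A →
        (M.Q × Option (Fin (K+1))) × (M.Q × Option (Fin (K+1))) × A × CC × Bool :=
      fun θ' => (θ'.src, θ'.dst, θ'.lab, θ'.guard, θ'.reset)
    have hinj : Function.Injective f := by
      rintro ⟨a1, a2, a3, a4, a5⟩ ⟨b1, b2, b3, b4, b5⟩ h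
      simp only [f, Prod.mk.injEq] at h
      obtain ⟨h1, h2, h3, h4, h5⟩ := h
      subst h1; subst h2; subst h3; subst h4; subst h5; rfl
    have hfin' : (f '' (strictify M K).trans).Finite := by
      refine Set.Finite.subset
        (Set.finite_univ.prod (Set.finite_univ.prod (Set.finite_univ.prod
          (hGfin.prod Set.finite_univ)))) ?_
      rintro _ ⟨θ', hθ', rfl⟩
      obtain ⟨θ, hθ, hlab, w, hguard, -⟩ := hθ'
      exact ⟨Set.mem_univ _, Set.mem_univ _, Set.mem_univ _, ⟨w, hguard⟩, Set.mem_univ _⟩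
    exact Set.Finite.of_finite_image hfin' hinj.injOn

lemma TTrans.ext' {Q : Type} {θ₁ θ₂ : TTrans Q A} (h1 : θ₁.src = θ₂.src)
    (h2 : θ₁.dst = θ₂.dst) (h3 : θ₁.lab = θ₂.lab) (h4 : θ₁.guard = θ₂.guard)
    (h5 : θ₁.reset = θ₂.reset) : θ₁ = θ₂ := by
  cases θ₁; cases θ₂; simp_all

lemma fwd {M : TA A} (hirta : M.IsIRTA) {K : ℕ} (hK : M.MaxConstLE K)
    {u : TimedWord A} {c c₂ : M.Q × ℝ≥0} (hs : Steps M c u c₂) :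
    ∀ c' : (M.Q × Option (Fin (K+1))) × ℝ≥0, Rel M K c c' →
      ∃ c₂' : (M.Q × Option (Fin (K+1))) × ℝ≥0,
        Steps (strictify M K) c' u c₂' ∧ Rel M K c₂ c₂' := by
  induction hs with
  | nil c => exact fun c' h => ⟨c', Steps.nil (M := strictify M K) c', h⟩
  | @cons q ν t a u c₂ θ hθ hsrc hlab hg hrest ih =>
      rintro ⟨⟨p₁, o⟩, ν'⟩ ⟨hq, hrel⟩
      have hq' : p₁ = q := hq
      subst hq'
      rcases hrel with ⟨m, ho, hν⟩ | ⟨ho, hν⟩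
      · have ho' : o = some m := ho
        subst ho'
        have hν' : ν = ν' + (m.1 : ℝ≥0) := hν
        have hx : ν + t = (ν' + t) + (m.1 : ℝ≥0) := by rw [hν']; ring
        by_cases hr : θ.reset = true
        · obtain ⟨n, hgn⟩ := hirta θ hθ hr
          have hnK : n ≤ K := by
            have h := hK θ hθ
            rw [hgn] at h
            simpa only [CC.maxConst] using h
          have hxn : (ν' + t) + (m.1 : ℝ≥0) = (n : ℝ≥0) := by
            have h := hg
            rw [hgn] at h
            simp only [CC.sat] at h
            rw [← hx]; exact h
          obtain ⟨hwnat, hwle⟩ := natval_of_add_nat_eq hnK hxn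
          have hmem : (⟨(p₁, some m), (θ.dst, some ⟨0, K.succ_pos⟩), a,
              phiOf K (ν' + t), true⟩ : TTrans (M.Q × Option (Fin (K+1))) A) ∈
              (strictify M K).trans := by
            refine ⟨θ, hθ, hlab.symm, ν' + t, rfl, ?_,
              Or.inl ⟨m, by rw [hsrc], ?_, Or.inl ⟨hr, rfl⟩⟩⟩
            · rw [if_pos ⟨⟨n - m.1, hwnat⟩, hwle⟩]
            · rw [← hx]; exact hg
          obtain ⟨c₂', hsteps₂, hrel₂⟩ := ih ((θ.dst, some ⟨0, K.succ_pos⟩), 0)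
            ⟨rfl, Or.inl ⟨⟨0, K.succ_pos⟩, rfl, by simp [hr]⟩⟩
          exact ⟨c₂', Steps.cons _ hmem rfl rfl (phiOf_sat_self K (ν' + t)) hsteps₂, hrel₂⟩
        · have hrF : θ.reset = false := by simpa using hr
          by_cases hn : ∃ n : Fin (K+1), (ν' + t) + (m.1 : ℝ≥0) = (n.1 : ℝ≥0)
          · obtain ⟨n, hn⟩ := hn
            have hnK : n.1 ≤ K := Nat.lt_succ_iff.mp n.2
            obtain ⟨hwnat, hwle⟩ := natval_of_add_nat_eq hnK hn
            have hmem : (⟨(p₁, some m), (θ.dst, some n), a, phiOf K (ν' + t), true⟩ :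
                TTrans (M.Q × Option (Fin (K+1))) A) ∈ (strictify M K).trans := by
              refine ⟨θ, hθ, hlab.symm, ν' + t, rfl, ?_,
                Or.inl ⟨m, by rw [hsrc], ?_, Or.inr (Or.inl ⟨hrF, n, hn, rfl⟩)⟩⟩
              · rw [if_pos ⟨⟨n.1 - m.1, hwnat⟩, hwle⟩]
              · rw [← hx]; exact hg
            obtain ⟨c₂', hsteps₂, hrel₂⟩ := ih ((θ.dst, some n), 0)
              ⟨rfl, Or.inl ⟨n, rfl, by rw [if_neg hr, hx, hn, zero_add]⟩⟩
            exact ⟨c₂', Steps.cons _ hmem rfl rfl (phiOf_sat_self K (ν' + t)) hsteps₂, hrel₂⟩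
          · by_cases hleK : (ν' + t) + (m.1 : ℝ≥0) ≤ (K : ℝ≥0)
            · have hcondneg := not_intcond_of hn hleK
              have hmem : (⟨(p₁, some m), (θ.dst, some m), a, phiOf K (ν' + t), false⟩ :
                  TTrans (M.Q × Option (Fin (K+1))) A) ∈ (strictify M K).trans := by
                refine ⟨θ, hθ, hlab.symm, ν' + t, rfl, ?_,
                  Or.inl ⟨m, by rw [hsrc], ?_, Or.inr (Or.inr (Or.inl ⟨hrF, hn, hleK, rfl⟩))⟩⟩
                · rw [if_neg hcondneg]
                · rw [← hx]; exact hg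
              obtain ⟨c₂', hsteps₂, hrel₂⟩ := ih ((θ.dst, some m), ν' + t)
                ⟨rfl, Or.inl ⟨m, rfl, by rw [if_neg hr]; exact hx⟩⟩
              exact ⟨c₂', Steps.cons _ hmem rfl rfl (phiOf_sat_self K (ν' + t)) hsteps₂, hrel₂⟩
            · have hgtK := not_le.mp hleK
              have hmem : (⟨(p₁, some m), (θ.dst, none), a, phiOf K (ν' + t),
                  if IsNatVal (ν' + t) ∧ (ν' + t) ≤ (K : ℝ≥0) then true else false⟩ :
                  TTrans (M.Q × Option (Fin (K+1))) A) ∈ (strictify M K).trans := by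
                refine ⟨θ, hθ, hlab.symm, ν' + t, rfl, rfl,
                  Or.inl ⟨m, by rw [hsrc], ?_, Or.inr (Or.inr (Or.inr ⟨hrF, hgtK, rfl⟩))⟩⟩
                rw [← hx]; exact hg
              obtain ⟨c₂', hsteps₂, hrel₂⟩ := ih ((θ.dst, none),
                  if (if IsNatVal (ν' + t) ∧ (ν' + t) ≤ (K : ℝ≥0) then true else false) = true
                    then 0 else ν' + t)
                ⟨rfl, Or.inr ⟨rfl, by rw [if_neg hr, hx]; exact hgtK⟩⟩
              exact ⟨c₂', Steps.cons _ hmem rfl rfl (phiOf_sat_self K (ν' + t)) hsteps₂, hrel₂⟩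
      · have ho' : o = none := ho
        subst ho'
        have hνK : (K : ℝ≥0) < ν := hν
        have hxK : (K : ℝ≥0) < ν + t := hνK.trans_le le_self_add
        have hrF : θ.reset = false := by
          by_contra hc
          have hr' : θ.reset = true := by simpa using hc
          obtain ⟨n, hgn⟩ := hirta θ hθ hr'
          have hnK : n ≤ K := by
            have h := hK θ hθ; rw [hgn] at h; simpa only [CC.maxConst] using h
          have h := hg
          rw [hgn] at h
          simp only [CC.sat] at h
          rw [h] at hxK
          exact absurd hxK (not_lt.mpr (Nat.cast_le.mpr hnK))
        have hsatK1 : θ.guard.sat ((K : ℝ≥0) + 1) :=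
          (sat_gtK (hK θ hθ) hxK (lt_add_of_pos_right _ one_pos)).mp hg
        have hmem : (⟨(p₁, none), (θ.dst, none), a, phiOf K (ν' + t),
            if IsNatVal (ν' + t) ∧ (ν' + t) ≤ (K : ℝ≥0) then true else false⟩ :
            TTrans (M.Q × Option (Fin (K+1))) A) ∈ (strictify M K).trans :=
          ⟨θ, hθ, hlab.symm, ν' + t, rfl, rfl, Or.inr ⟨by rw [hsrc], hsatK1, rfl⟩⟩
        obtain ⟨c₂', hsteps₂, hrel₂⟩ := ih ((θ.dst, none),
            if (if IsNatVal (ν' + t) ∧ (ν' + t) ≤ (K : ℝ≥0) then true else false) = true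
              then 0 else ν' + t)
          ⟨rfl, Or.inr ⟨rfl, by rw [if_neg (by simp [hrF] : ¬ θ.reset = true)]; exact hxK⟩⟩
        exact ⟨c₂', Steps.cons _ hmem rfl rfl (phiOf_sat_self K (ν' + t)) hsteps₂, hrel₂⟩

lemma bwd {M : TA A} (hirta : M.IsIRTA) {K : ℕ} (hK : M.MaxConstLE K)
    {u : TimedWord A} {c' c₂' : (strictify M K).Q × ℝ≥0}
    (hs : Steps (strictify M K) c' u c₂') :
    ∀ c : M.Q × ℝ≥0, Rel M K c c' →
      ∃ c₂ : M.Q × ℝ≥0, Steps M c u c₂ ∧ Rel M K c₂ c₂' := by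
  induction hs with
  | nil c => exact fun c₀ h => ⟨c₀, Steps.nil c₀, h⟩
  | @cons p ν' t a u c₂' θ' hθ' hsrc hlab hg hrest ih =>
      rintro ⟨q, ν⟩ ⟨hq, hrel⟩
      obtain ⟨p₁, o⟩ := p
      obtain ⟨θ, hθ, hlab', w₀, hguard, hreset, hbr⟩ := hθ'
      have hq' : p₁ = q := hq
      subst hq'
      have hlabθ : θ.lab = a := by rw [← hlab', hlab]
      rw [hguard] at hg
      have hreg : RegEq K (ν' + t) w₀ := regEq_of_phiOf_sat hg
      rcases hrel with ⟨m, ho, hν⟩ | ⟨ho, hν⟩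
      · have ho' : o = some m := ho
        subst ho'
        have hν' : ν = ν' + (m.1 : ℝ≥0) := hν
        have hx : ν + t = (ν' + t) + (m.1 : ℝ≥0) := by rw [hν']; ring
        rcases hbr with ⟨m₀, hsrc', hsat, hdb⟩ | ⟨hsrc', -, -⟩
        swap
        · exfalso
          have := congrArg Prod.snd (hsrc'.symm.trans hsrc)
          simp at this
        · have hsm : ((θ.src : M.Q), some m₀) = (p₁, some m) := hsrc'.symm.trans hsrc
          have hqsrc : θ.src = p₁ := congrArg Prod.fst hsm
          have hm : m₀ = m := by simpa using congrArg Prod.snd hsm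
          subst hm
          have hsatz : θ.guard.sat ((ν' + t) + (m₀.1 : ℝ≥0)) :=
            (sat_of_regEq (hK θ hθ) (regEq_add_nat m₀.1 hreg)).mpr hsat
          have hsatν : θ.guard.sat (ν + t) := by rw [hx]; exact hsatz
          rcases hdb with ⟨hr, hd⟩ | ⟨hr, n, hn, hd⟩ | ⟨hr, hnn, hle, hd⟩ | ⟨hr, hgt, hd⟩
          · obtain ⟨n, hgn⟩ := hirta θ hθ hr
            have hnK : n ≤ K := by
              have h := hK θ hθ; rw [hgn] at h; simpa only [CC.maxConst] using h
            have hwn : w₀ + (m₀.1 : ℝ≥0) = (n : ℝ≥0) := by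
              have h := hsat; rw [hgn] at h; simpa only [CC.sat] using h
            obtain ⟨hwnat, hwle⟩ := natval_of_add_nat_eq hnK hwn
            have hres : θ'.reset = true := by
              rw [hreset, if_pos ⟨⟨n - m₀.1, hwnat⟩, hwle⟩]
            have hrelnext : Rel M K (θ.dst, 0)
                (θ'.dst, if θ'.reset = true then 0 else ν' + t) := by
              rw [hd, hres]
              exact ⟨rfl, Or.inl ⟨⟨0, K.succ_pos⟩, rfl, by simp⟩⟩
            obtain ⟨c₂, hsteps₂, hrel₂⟩ := ih (θ.dst, 0) hrelnext
            exact ⟨c₂, Steps.cons θ hθ hqsrc hlabθ hsatν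
              (by rw [if_pos hr]; exact hsteps₂), hrel₂⟩
          · have hnK : n.1 ≤ K := Nat.lt_succ_iff.mp n.2
            obtain ⟨hwnat, hwle⟩ := natval_of_add_nat_eq hnK hn
            have hzw : ν' + t = w₀ := phiOf_sat_of_natval ⟨n.1 - m₀.1, hwnat⟩ hwle hg
            have hres : θ'.reset = true := by
              rw [hreset, if_pos ⟨⟨n.1 - m₀.1, hwnat⟩, hwle⟩]
            have hxn : ν + t = (n.1 : ℝ≥0) := by rw [hx, hzw, hn]
            have hrelnext : Rel M K (θ.dst, ν + t)
                (θ'.dst, if θ'.reset = true then 0 else ν' + t) := by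
              rw [hd, hres]
              exact ⟨rfl, Or.inl ⟨n, rfl, by rw [hxn]; simp⟩⟩
            obtain ⟨c₂, hsteps₂, hrel₂⟩ := ih (θ.dst, ν + t) hrelnext
            exact ⟨c₂, Steps.cons θ hθ hqsrc hlabθ hsatν
              (by rw [if_neg (by simp [hr] : ¬ θ.reset = true)]; exact hsteps₂), hrel₂⟩
          · have hres : θ'.reset = false := by
              rw [hreset, if_neg (not_intcond_of hnn hle)]
            have hrelnext : Rel M K (θ.dst, ν + t)
                (θ'.dst, if θ'.reset = true then 0 else ν' + t) := by
              rw [hd, hres]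
              exact ⟨rfl, Or.inl ⟨m₀, rfl, by rw [if_neg Bool.false_ne_true]; exact hx⟩⟩
            obtain ⟨c₂, hsteps₂, hrel₂⟩ := ih (θ.dst, ν + t) hrelnext
            exact ⟨c₂, Steps.cons θ hθ hqsrc hlabθ hsatν
              (by rw [if_neg (by simp [hr] : ¬ θ.reset = true)]; exact hsteps₂), hrel₂⟩
          · have hgtν : (K : ℝ≥0) < ν + t := by
              rw [hx]
              exact (regEq_gtK_iff (regEq_add_nat m₀.1 hreg)).mpr hgt
            have hrelnext : Rel M K (θ.dst, ν + t)
                (θ'.dst, if θ'.reset = true then 0 else ν' + t) := by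
              rw [hd]
              exact ⟨rfl, Or.inr ⟨rfl, hgtν⟩⟩
            obtain ⟨c₂, hsteps₂, hrel₂⟩ := ih (θ.dst, ν + t) hrelnext
            exact ⟨c₂, Steps.cons θ hθ hqsrc hlabθ hsatν
              (by rw [if_neg (by simp [hr] : ¬ θ.reset = true)]; exact hsteps₂), hrel₂⟩
      · have ho' : o = none := ho
        subst ho'
        have hνK : (K : ℝ≥0) < ν := hν
        rcases hbr with ⟨m₀, hsrc', -, -⟩ | ⟨hsrc', hsatK1, hd⟩
        · exfalso
          have := congrArg Prod.snd (hsrc'.symm.trans hsrc)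
          simp at this
        · have hqsrc : θ.src = p₁ := congrArg Prod.fst (hsrc'.symm.trans hsrc)
          have hrF : θ.reset = false := by
            by_contra hc
            have hr' : θ.reset = true := by simpa using hc
            obtain ⟨n, hgn⟩ := hirta θ hθ hr'
            have hnK : n ≤ K := by
              have h := hK θ hθ; rw [hgn] at h; simpa only [CC.maxConst] using h
            have h := hsatK1
            rw [hgn] at h
            simp only [CC.sat] at h
            have : (K : ℝ≥0) < n := h ▸ lt_add_of_pos_right _ one_pos
            exact absurd this (not_lt.mpr (Nat.cast_le.mpr hnK))
          have hxK : (K : ℝ≥0) < ν + t := hνK.trans_le le_self_add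
          have hsatν : θ.guard.sat (ν + t) :=
            (sat_gtK (hK θ hθ) hxK (lt_add_of_pos_right _ one_pos)).mpr hsatK1
          have hrelnext : Rel M K (θ.dst, ν + t)
              (θ'.dst, if θ'.reset = true then 0 else ν' + t) := by
            rw [hd]
            exact ⟨rfl, Or.inr ⟨rfl, hxK⟩⟩
          obtain ⟨c₂, hsteps₂, hrel₂⟩ := ih (θ.dst, ν + t) hrelnext
          exact ⟨c₂, Steps.cons θ hθ hqsrc hlabθ hsatν
            (by rw [if_neg (by simp [hrF] : ¬ θ.reset = true)]; exact hsteps₂), hrel₂⟩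

lemma strictify_lang {M : TA A} (hirta : M.IsIRTA) {K : ℕ} (hK : M.MaxConstLE K) :
    (strictify M K).Lang = M.Lang := by
  ext u
  constructor
  · rintro ⟨q', ν', hsteps, hfin⟩
    obtain ⟨⟨q₂, ν₂⟩, hsteps₂, hrel₂⟩ := bwd hirta hK hsteps (M.init, 0)
      ⟨rfl, Or.inl ⟨⟨0, K.succ_pos⟩, rfl, by simp⟩⟩
    have hq : q'.1 = q₂ := hrel₂.1
    exact ⟨q₂, ν₂, hsteps₂, hq ▸ (hfin : q'.1 ∈ M.final)⟩
  · rintro ⟨q₂, ν₂, hsteps, hfin⟩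
    obtain ⟨⟨p', ν'⟩, hsteps', hrel'⟩ := fwd hirta hK hsteps
      ((M.init, some ⟨0, K.succ_pos⟩), 0) ⟨rfl, Or.inl ⟨⟨0, K.succ_pos⟩, rfl, by simp⟩⟩
    have hp : p'.1 = q₂ := hrel'.1
    exact ⟨p', ν', hsteps', show p'.1 ∈ M.final from hp.symm ▸ hfin⟩

lemma strictify_det {M : TA A} {K : ℕ} (hK : M.MaxConstLE K)
    (hdet : M.Deterministic) : (strictify M K).Deterministic := by
  rintro θ₁' ⟨θ₁, hθ₁, hlab₁, w₁, hg₁, hr₁, hb₁⟩ θ₂' ⟨θ₂, hθ₂, hlab₂, w₂, hg₂, hr₂, hb₂⟩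
    hne hsrc hlab z hz
  obtain ⟨hz₁, hz₂⟩ := hz
  apply hne
  rw [hg₁] at hz₁
  rw [hg₂] at hz₂
  have hgeq : phiOf K w₁ = phiOf K w₂ := by
    rw [← phiOf_congr (regEq_of_phiOf_sat hz₁), ← phiOf_congr (regEq_of_phiOf_sat hz₂)]
  have hreg : RegEq K w₁ w₂ := regEq_of_phiOf_sat (hgeq ▸ phiOf_sat_self K w₁)
  have hreseq : θ₁'.reset = θ₂'.reset := by
    rw [hr₁, hr₂]
    have hiff : (IsNatVal w₁ ∧ w₁ ≤ (K : ℝ≥0)) ↔ (IsNatVal w₂ ∧ w₂ ≤ (K : ℝ≥0)) := by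
      rw [← phiOf_eq_form, ← phiOf_eq_form, hgeq]
    by_cases h : IsNatVal w₁ ∧ w₁ ≤ (K : ℝ≥0)
    · rw [if_pos h, if_pos (hiff.mp h)]
    · rw [if_neg h, if_neg (fun hc => h (hiff.mpr hc))]
  have hguardeq : θ₁'.guard = θ₂'.guard := by rw [hg₁, hg₂, hgeq]
  rcases hb₁ with ⟨m₁, hs₁, hsat₁, hd₁⟩ | ⟨hs₁, hsat₁, hd₁⟩
  · rcases hb₂ with ⟨m₂, hs₂, hsat₂, hd₂⟩ | ⟨hs₂, hsat₂, hd₂⟩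
    · have hsm : ((θ₁.src : M.Q), some m₁) = (θ₂.src, some m₂) := by
        rw [← hs₁, ← hs₂, hsrc]
      have hq12 : θ₁.src = θ₂.src := congrArg Prod.fst hsm
      have hm12 : m₁ = m₂ := by simpa using congrArg Prod.snd hsm
      subst hm12
      have hlab12 : θ₁.lab = θ₂.lab := by rw [← hlab₁, ← hlab₂, hlab]
      have h1 : θ₁.guard.sat (z + (m₁.1 : ℝ≥0)) :=
        (sat_of_regEq (hK θ₁ hθ₁) (regEq_add_nat m₁.1 (regEq_of_phiOf_sat hz₁))).mpr hsat₁
      have h2 : θ₂.guard.sat (z + (m₁.1 : ℝ≥0)) :=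
        (sat_of_regEq (hK θ₂ hθ₂) (regEq_add_nat m₁.1 (regEq_of_phiOf_sat hz₂))).mpr hsat₂
      have hteq : θ₁ = θ₂ := by
        by_contra hc
        exact hdet θ₁ hθ₁ θ₂ hθ₂ hc hq12 hlab12 _ ⟨h1, h2⟩
      subst hteq
      have hregm : RegEq K (w₁ + (m₁.1 : ℝ≥0)) (w₂ + (m₁.1 : ℝ≥0)) := regEq_add_nat m₁.1 hreg
      have hdeq : θ₁'.dst = θ₂'.dst := by
        rcases hd₁ with ⟨hr, hd⟩ | ⟨hr, n, hn, hd⟩ | ⟨hr, hnn, hle, hd⟩ | ⟨hr, hgt, hd⟩ <;>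
          rcases hd₂ with ⟨hr', hd'⟩ | ⟨hr', n', hn', hd'⟩ | ⟨hr', hnn', hle', hd'⟩ |
            ⟨hr', hgt', hd'⟩
        · rw [hd, hd']
        · simp [hr] at hr'
        · simp [hr] at hr'
        · simp [hr] at hr'
        · simp [hr'] at hr
        · have hn2 : w₂ + (m₁.1 : ℝ≥0) = (n.1 : ℝ≥0) := exn_transfer hregm hn
          have hnn' : n = n' := by
            have h := hn2.symm.trans hn'
            exact Fin.ext (by exact_mod_cast h)
          rw [hd, hd', hnn']
        · exact absurd ⟨n, exn_transfer hregm hn⟩ hnn'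
        · have hn2 := exn_transfer hregm hn
          rw [hn2] at hgt'
          exact absurd hgt' (not_lt.mpr (by exact_mod_cast Nat.lt_succ_iff.mp n.2))
        · simp [hr'] at hr
        · exact absurd ⟨n', exn_transfer (regEq_symm hregm) hn'⟩ hnn
        · rw [hd, hd']
        · exact absurd hle (not_le.mpr ((regEq_gtK_iff hregm).mpr hgt'))
        · simp [hr'] at hr
        · have hn2 := exn_transfer (regEq_symm hregm) hn'
          rw [hn2] at hgt
          exact absurd hgt (not_lt.mpr (by exact_mod_cast Nat.lt_succ_iff.mp n'.2))
        · exact absurd hle' (not_le.mpr ((regEq_gtK_iff hregm).mp hgt))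
        · rw [hd, hd']
      exact TTrans.ext' hsrc hdeq hlab hguardeq hreseq
    · exfalso
      have := congrArg Prod.snd ((hs₁.symm.trans hsrc).trans hs₂)
      simp at this
  · rcases hb₂ with ⟨m₂, hs₂, hsat₂, hd₂⟩ | ⟨hs₂, hsat₂, hd₂⟩
    · exfalso
      have := congrArg Prod.snd ((hs₁.symm.trans hsrc).trans hs₂)
      simp at this
    · have hq12 : θ₁.src = θ₂.src := congrArg Prod.fst ((hs₁.symm.trans hsrc).trans hs₂)
      have hlab12 : θ₁.lab = θ₂.lab := by rw [← hlab₁, ← hlab₂, hlab]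
      have hteq : θ₁ = θ₂ := by
        by_contra hc
        exact hdet θ₁ hθ₁ θ₂ hθ₂ hc hq12 hlab12 _ ⟨hsat₁, hsat₂⟩
      subst hteq
      exact TTrans.ext' hsrc (by rw [hd₁, hd₂]) hlab hguardeq hreseq

end Statement0Aux


/-- every language of a (finite) 1-IRTA is the language of a strict
1-IRTA with no greater maximal constant; determinism can be preserved. -/
theorem statement0 {A : Type} [Finite A] (M : TA A) (hfin : M.IsFinite)
    (hirta : M.IsIRTA) (K : ℕ) (hK : M.MaxConstLE K) :
    ∃ M' : TA A, M'.IsFinite ∧ M'.IsIRTA ∧ M'.IsStrict K ∧ M'.MaxConstLE K ∧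
      M'.Lang = M.Lang ∧ (M.Deterministic → M'.Deterministic) :=
  ⟨strictify M K, strictify_finite hfin K, strictify_irta M K, strictify_strict M K,
    strictify_maxConst M K, strictify_lang hirta hK, fun hdet => strictify_det hK hdet⟩

end IRTA
end

section
/- Let L be a timed language, K ∈ ℕ, and ≈ an L-preserving, K-monotonic equivalence on timed words of finite index. Then in the strict one-clock deterministic integer-reset timed automaton A_≈ built from ≈, for every timed word u there is a run from the initial configuration ([ε]_≈, 0) on u ending in the configuration ([u]_≈, c^K(u)). -/
open scoped NNReal Classical

namespace IRTA

lemma cKAux_append (K : ℕ) (v : ℝ≥0) (d₁ d₂ : Timestamp) :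
    cKAux K v (d₁ ++ d₂) = cKAux K (cKAux K v d₁) d₂ := by
  induction d₁ generalizing v with
  | nil => rfl
  | cons t d ih => simp [cKAux, ih]

lemma phiOf_sat (K : ℕ) (x : ℝ≥0) : (phiOf K x).sat x := by
  unfold phiOf
  split_ifs with h1 h2
  · obtain ⟨m, rfl⟩ := h2
    simp [CC.sat]
  · refine ⟨?_, ?_⟩
    · exact lt_of_le_of_ne (Nat.floor_le zero_le) (fun h => h2 ⟨⌊x⌋₊, h.symm⟩)
    · show x < ((⌊x⌋₊ + 1 : ℕ) : ℝ≥0)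
      push_cast
      exact Nat.lt_floor_add_one x
  · exact lt_of_not_ge h1

lemma steps_append {A : Type} {M : TA A} {c₁ c₂ c₃ : M.Q × ℝ≥0} {w₁ w₂ : TimedWord A}
    (h₁ : Steps M c₁ w₁ c₂) (h₂ : Steps M c₂ w₂ c₃) : Steps M c₁ (w₁ ++ w₂) c₃ := by
  induction h₁ with
  | nil => exact h₂
  | cons θ hθ hsrc hlab hg hrest ih => exact Steps.cons θ hθ hsrc hlab hg (ih h₂)

/-- in `A_≈`, every timed word `u` has a run from the initial
configuration to `([u]_≈, c^K(u))`. -/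
theorem statement1 {A : Type} [Finite A] (L : Set (TimedWord A)) (K : ℕ)
    (s : Setoid (TimedWord A)) (hpres : LPreserving L s.r) (hmono : KMonotonic K s.r)
    (hfin : FiniteIndex s.r) :
    ∀ u : TimedWord A,
      Steps (Aapprox L K s) ((Aapprox L K s).init, 0) u (Quotient.mk s u, cKW K u) := by
  intro u
  induction u using List.reverseRecOn with
  | nil =>
      have h0 : cKW (A := A) K [] = 0 := rfl
      rw [h0]
      exact Steps.nil _
  | append_singleton u x ih =>
      obtain ⟨t, a⟩ := x
      have key : cKW K (u ++ [(t, a)]) = resetStep K (cKW K u + t) := by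
        simp [cKW, cK, cKAux_append, cKAux]
      set θ : TTrans (Quotient s) A :=
        ⟨Quotient.mk s u, Quotient.mk s (u ++ [(t, a)]), a, phiOf K (cKW K u + t),
          if ∃ m : ℕ, m ≤ K ∧ cKW K u + t = (m : ℝ≥0) then true else false⟩ with hθdef
      have hθ : θ ∈ (Aapprox L K s).trans := by
        refine ⟨u, a, t, rfl, rfl, rfl, rfl, ?_⟩
        by_cases h : ∃ m : ℕ, m ≤ K ∧ cKW K u + t = (m : ℝ≥0) <;> simp [hθdef, h]
      have hstep : Steps (Aapprox L K s) (Quotient.mk s u, cKW K u) [(t, a)]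
          (Quotient.mk s (u ++ [(t, a)]), cKW K (u ++ [(t, a)])) := by
        refine Steps.cons θ hθ rfl rfl (phiOf_sat K (cKW K u + t)) ?_
        have hval : (if θ.reset then 0 else cKW K u + t) = cKW K (u ++ [(t, a)]) := by
          rw [key]
          unfold resetStep
          by_cases h : ∃ m : ℕ, m ≤ K ∧ cKW K u + t = (m : ℝ≥0) <;> simp [hθdef, h]
        rw [hval]
        exact Steps.nil _
      exact steps_append ih hstep

end IRTA
end

section
/- Let K ∈ ℕ and x, x' ∈ ℝ≥0 with x ≡^K x'. For every timestamp t1 t2 … tn, if τ_{x→x'}(t1 t2 … tn) = t'1 t'2 … t'n, then c^K(x t1 … t_{n−1}) + t_n ≡^K c^K(x' t'1 … t'_{n−1}) + t'_n, where x t1 … t_{n−1} denotes the timestamp obtained by prepending x to t1 … t_{n−1}. -/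
open scoped NNReal Classical

namespace IRTA

/-! ### Auxiliary lemmas for statement 4 -/

lemma floor_add_fracPart (x : ℝ≥0) : (⌊x⌋₊ : ℝ≥0) + fracPart x = x := by
  rw [fracPart, add_tsub_cancel_of_le (Nat.floor_le zero_le)]

lemma fracPart_lt_one (x : ℝ≥0) : fracPart x < 1 := by
  rw [fracPart, tsub_lt_iff_left (Nat.floor_le zero_le)]
  exact Nat.lt_floor_add_one x

lemma floor_natCast_add {n : ℕ} {r : ℝ≥0} (hr : r < 1) : ⌊(n : ℝ≥0) + r⌋₊ = n :=
  (Nat.floor_eq_iff zero_le).mpr ⟨le_self_add, add_lt_add_right hr _⟩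

lemma fracPart_natCast_add {n : ℕ} {r : ℝ≥0} (hr : r < 1) :
    fracPart ((n : ℝ≥0) + r) = r := by
  rw [fracPart, floor_natCast_add hr, add_tsub_cancel_left]

lemma fracPart_natCast (n : ℕ) : fracPart (n : ℝ≥0) = 0 := by
  simpa using fracPart_natCast_add (n := n) (r := 0) one_pos

lemma eq_floor_of_fracPart_eq_zero {x : ℝ≥0} (h : fracPart x = 0) :
    x = (⌊x⌋₊ : ℝ≥0) := by
  have := floor_add_fracPart x
  rw [h, add_zero] at this
  exact this.symm

lemma isNatVal_iff (x : ℝ≥0) : IsNatVal x ↔ fracPart x = 0 := by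
  constructor
  · rintro ⟨m, rfl⟩; exact fracPart_natCast m
  · intro h; exact ⟨⌊x⌋₊, eq_floor_of_fracPart_eq_zero h⟩

lemma regEq_refl (K : ℕ) (x : ℝ≥0) : RegEq K x x := Or.inl ⟨rfl, Iff.rfl⟩

lemma regEq_resetStep (K : ℕ) {a b : ℝ≥0} (h : RegEq K a b) :
    RegEq K (resetStep K a) (resetStep K b) := by
  unfold resetStep
  rcases h with ⟨hfl, hfr⟩ | ⟨ha, hb⟩
  · by_cases hca : ∃ m : ℕ, m ≤ K ∧ a = (m : ℝ≥0)
    · obtain ⟨m, hm, ha⟩ := hca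
      have hfa : fracPart a = 0 := by rw [ha]; exact fracPart_natCast m
      have hbm : b = (m : ℝ≥0) := by
        have hfb : fracPart b = 0 := hfr.1 hfa
        rw [eq_floor_of_fracPart_eq_zero hfb, ← hfl, ha, Nat.floor_natCast]
      rw [if_pos ⟨m, hm, ha⟩, if_pos ⟨m, hm, hbm⟩]
      exact regEq_refl K 0
    · have hcb : ¬ ∃ m : ℕ, m ≤ K ∧ b = (m : ℝ≥0) := by
        rintro ⟨m, hm, hb⟩
        apply hca
        have hfb : fracPart b = 0 := by rw [hb]; exact fracPart_natCast m
        refine ⟨m, hm, ?_⟩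
        rw [eq_floor_of_fracPart_eq_zero (hfr.2 hfb), hfl, hb, Nat.floor_natCast]
      rw [if_neg hca, if_neg hcb]
      exact Or.inl ⟨hfl, hfr⟩
  · have hca : ¬ ∃ m : ℕ, m ≤ K ∧ a = (m : ℝ≥0) := by
      rintro ⟨m, hm, rfl⟩
      exact absurd (Nat.cast_le.mpr hm) (not_le.mpr ha)
    have hcb : ¬ ∃ m : ℕ, m ≤ K ∧ b = (m : ℝ≥0) := by
      rintro ⟨m, hm, rfl⟩
      exact absurd (Nat.cast_le.mpr hm) (not_le.mpr hb)
    rw [if_neg hca, if_neg hcb]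
    exact Or.inr ⟨ha, hb⟩

lemma regEq_of_parts (K k : ℕ) {r r' : ℝ≥0} (hr : r < 2) (hr' : r' < 2)
    (h1 : r < 1 ↔ r' < 1) (h0 : r = 0 ↔ r' = 0) (heq : r = 1 ↔ r' = 1) :
    RegEq K ((k : ℝ≥0) + r) ((k : ℝ≥0) + r') := by
  left
  by_cases hlt : r < 1
  · have hlt' : r' < 1 := h1.1 hlt
    rw [floor_natCast_add hlt, floor_natCast_add hlt',
      fracPart_natCast_add hlt, fracPart_natCast_add hlt']
    exact ⟨rfl, h0⟩
  · have hge : (1 : ℝ≥0) ≤ r := not_lt.mp hlt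
    have hge' : (1 : ℝ≥0) ≤ r' := not_lt.mp (h1.not.1 hlt)
    have e : (k : ℝ≥0) + r = ((k + 1 : ℕ) : ℝ≥0) + (r - 1) := by
      push_cast
      rw [add_assoc, add_tsub_cancel_of_le hge]
    have e' : (k : ℝ≥0) + r' = ((k + 1 : ℕ) : ℝ≥0) + (r' - 1) := by
      push_cast
      rw [add_assoc, add_tsub_cancel_of_le hge']
    have hlt1 : r - 1 < 1 := by
      rw [tsub_lt_iff_left hge, one_add_one_eq_two]; exact hr
    have hlt1' : r' - 1 < 1 := by
      rw [tsub_lt_iff_left hge', one_add_one_eq_two]; exact hr'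
    rw [e, e', floor_natCast_add hlt1, floor_natCast_add hlt1',
      fracPart_natCast_add hlt1, fracPart_natCast_add hlt1']
    refine ⟨rfl, ?_⟩
    rw [tsub_eq_zero_iff_le, tsub_eq_zero_iff_le]
    constructor
    · intro hle; exact (heq.1 (le_antisymm hle hge)).le
    · intro hle; exact (heq.2 (le_antisymm hle hge')).le

lemma regEq_add_tauStep (K : ℕ) {y y' : ℝ≥0} (h : RegEq K y y') (t : ℝ≥0) :
    RegEq K (y + t) (y' + tauStep K y y' t) := by
  unfold tauStep
  split_ifs with hc
  · rcases hc with ⟨hy, hy'⟩ | ⟨hy, hy'⟩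
    · rcases h with ⟨hfl, hfr⟩ | ⟨hy2, hy2'⟩
      · obtain ⟨m, rfl⟩ := hy
        obtain ⟨m', rfl⟩ := hy'
        rw [Nat.floor_natCast, Nat.floor_natCast] at hfl
        subst hfl
        exact regEq_refl K _
      · exact Or.inr ⟨lt_of_lt_of_le hy2 le_self_add, lt_of_lt_of_le hy2' le_self_add⟩
    · exact Or.inr ⟨lt_of_lt_of_le hy le_self_add, lt_of_lt_of_le hy' le_self_add⟩
  · push_neg at hc
    obtain ⟨hnat, hK⟩ := hc
    have hreg : ⌊y⌋₊ = ⌊y'⌋₊ ∧ (fracPart y = 0 ↔ fracPart y' = 0) := by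
      rcases h with h | ⟨h1, h2⟩
      · exact h
      · exact absurd h2 (not_lt.mpr (hK h1))
    obtain ⟨hfl, hfr⟩ := hreg
    have hfy : fracPart y ≠ 0 := by
      intro h0
      exact hnat ((isNatVal_iff y).2 h0) ((isNatVal_iff y').2 (hfr.1 h0))
    have hfy' : fracPart y' ≠ 0 := fun h0 => hfy (hfr.2 h0)
    set fy := fracPart y with hfydef
    set fy' := fracPart y' with hfy'def
    set s := fracPart t with hsdef
    set lam := 1 - fy with hlam
    set lam' := 1 - fy' with hlam'
    have hfy1 : fy < 1 := fracPart_lt_one y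
    have hfy1' : fy' < 1 := fracPart_lt_one y'
    have hs1 : s < 1 := fracPart_lt_one t
    have hlampos : 0 < lam := tsub_pos_of_lt hfy1
    have hlampos' : 0 < lam' := tsub_pos_of_lt hfy1'
    have hlamlt : lam < 1 := tsub_lt_self one_pos (pos_iff_ne_zero.mpr hfy)
    have hlamlt' : lam' < 1 := tsub_lt_self one_pos (pos_iff_ne_zero.mpr hfy')
    have hlamfy : fy + lam = 1 := add_tsub_cancel_of_le hfy1.le
    have hlamfy' : fy' + lam' = 1 := add_tsub_cancel_of_le hfy1'.le
    set s' := fScale lam lam' s with hs'def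
    -- key comparison facts
    have key_lt : s < lam → s' < lam' := by
      intro hsl
      rw [hs'def, fScale, if_pos hsl.le]
      calc lam' / lam * s < lam' / lam * lam := by
            exact mul_lt_mul_of_pos_left hsl (div_pos hlampos' hlampos)
        _ = lam' := div_mul_cancel₀ lam' hlampos.ne'
    have key_eq : s = lam → s' = lam' := by
      intro hsl
      rw [hs'def, fScale, if_pos hsl.le, hsl, div_mul_cancel₀ lam' hlampos.ne']
    have onelam : 1 - lam = fy := tsub_tsub_cancel_of_le hfy1.le
    have onelam' : 1 - lam' = fy' := tsub_tsub_cancel_of_le hfy1'.le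
    have key_gt : lam < s → lam' < s' ∧ s' < 1 := by
      intro hsl
      rw [hs'def, fScale, if_neg (not_le.mpr hsl), onelam, onelam']
      constructor
      · have : 0 < fy' / fy * (s - lam) :=
          mul_pos (div_pos (pos_iff_ne_zero.mpr hfy') (pos_iff_ne_zero.mpr hfy))
            (tsub_pos_of_lt hsl)
        exact lt_add_of_pos_right lam' this
      · have hslt : s - lam < fy := by
          rw [tsub_lt_iff_left hsl.le, ← onelam, add_tsub_cancel_of_le hlamlt.le]
          exact hs1
        have : fy' / fy * (s - lam) < fy' := by
          calc fy' / fy * (s - lam) < fy' / fy * fy :=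
                mul_lt_mul_of_pos_left hslt
                  (div_pos (pos_iff_ne_zero.mpr hfy') (pos_iff_ne_zero.mpr hfy))
            _ = fy' := div_mul_cancel₀ fy' hfy
        calc lam' + fy' / fy * (s - lam) < lam' + fy' := add_lt_add_right this lam'
          _ = 1 := by rw [add_comm]; exact hlamfy'
    have hs'1 : s' < 1 := by
      rcases lt_trichotomy s lam with hlt | heqq | hgt
      · exact lt_trans (key_lt hlt) hlamlt'
      · rw [key_eq heqq]; exact hlamlt'
      · exact (key_gt hgt).2
    -- the three iffs
    have l1 : s < lam ↔ fy + s < 1 := by rw [hlam]; exact lt_tsub_iff_left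
    have l2 : s' < lam' ↔ fy' + s' < 1 := by rw [hlam']; exact lt_tsub_iff_left
    have l1e : s = lam ↔ fy + s = 1 := by
      rw [hlam, eq_tsub_iff_add_eq_of_le hfy1.le, add_comm]
    have l2e : s' = lam' ↔ fy' + s' = 1 := by
      rw [hlam', eq_tsub_iff_add_eq_of_le hfy1'.le, add_comm]
    have iff_lt : fy + s < 1 ↔ fy' + s' < 1 := by
      rw [← l1, ← l2]
      rcases lt_trichotomy s lam with hlt | heqq | hgt
      · exact iff_of_true hlt (key_lt hlt)
      · exact iff_of_false (lt_irrefl _ ∘ (heqq ▸ ·))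
          (lt_irrefl _ ∘ ((key_eq heqq) ▸ ·))
      · exact iff_of_false (not_lt.mpr hgt.le) (not_lt.mpr (key_gt hgt).1.le)
    have iff_eq : fy + s = 1 ↔ fy' + s' = 1 := by
      rw [← l1e, ← l2e]
      rcases lt_trichotomy s lam with hlt | heqq | hgt
      · exact iff_of_false hlt.ne ((key_lt hlt).ne)
      · exact iff_of_true heqq (key_eq heqq)
      · exact iff_of_false hgt.ne' ((key_gt hgt).1.ne')
    have iff_zero : fy + s = 0 ↔ fy' + s' = 0 := by
      refine iff_of_false ?_ ?_
      · intro h0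
        exact hfy (by simpa using (add_eq_zero.mp h0).1)
      · intro h0
        exact hfy' (by simpa using (add_eq_zero.mp h0).1)
    -- decompose
    have ey : y + t = ((⌊y⌋₊ + ⌊t⌋₊ : ℕ) : ℝ≥0) + (fy + s) := by
      conv_lhs => rw [← floor_add_fracPart y, ← floor_add_fracPart t]
      push_cast
      ring
    have ey' : y' + ((⌊t⌋₊ : ℝ≥0) + s') = ((⌊y⌋₊ + ⌊t⌋₊ : ℕ) : ℝ≥0) + (fy' + s') := by
      conv_lhs => rw [← floor_add_fracPart y']
      rw [← hfl]
      push_cast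
      ring
    rw [ey, ey']
    exact regEq_of_parts K _ (by calc fy + s < 1 + 1 := add_lt_add hfy1 hs1
        _ = 2 := one_add_one_eq_two)
      (by calc fy' + s' < 1 + 1 := add_lt_add hfy1' hs'1
        _ = 2 := one_add_one_eq_two)
      iff_lt iff_zero iff_eq

lemma regEq_cKAux (K : ℕ) : ∀ (d : Timestamp) {y y' : ℝ≥0}, RegEq K y y' →
    RegEq K (cKAux K y d) (cKAux K y' (tauAux K y y' d))
  | [], _, _, h => h
  | t :: d, y, y', h => by
    simp only [cKAux, tauAux]
    exact regEq_cKAux K d (regEq_resetStep K (regEq_add_tauStep K h t))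

lemma tauAux_append (K : ℕ) : ∀ (d : Timestamp) (y y' t : ℝ≥0),
    tauAux K y y' (d ++ [t]) =
      tauAux K y y' d ++ [tauStep K (cKAux K y d) (cKAux K y' (tauAux K y y' d)) t]
  | [], _, _, _ => rfl
  | s :: d, y, y', t => by
    simp only [List.cons_append, tauAux, cKAux]
    rw [tauAux_append]

/-- property (1) of the rescaling bijection. -/
theorem statement4 (K : ℕ) (x x' : ℝ≥0) (h : RegEq K x x') (d : Timestamp) (t t' : ℝ≥0)
    (h2 : tau K x x' (d ++ [t]) = tau K x x' d ++ [t']) :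
    RegEq K (cK K (x :: d) + t) (cK K (x' :: tau K x x' d) + t') := by
  have hy : RegEq K (resetStep K x) (resetStep K x') := regEq_resetStep K h
  simp only [tau] at h2 ⊢
  rw [tauAux_append] at h2
  have ht' : t' = tauStep K (cKAux K (resetStep K x) d)
      (cKAux K (resetStep K x') (tauAux K (resetStep K x) (resetStep K x') d)) t := by
    have := List.append_cancel_left h2
    simpa using this.symm
  have hck : cK K (x :: d) = cKAux K (resetStep K x) d := by
    simp [cK, cKAux, zero_add]
  have hck' : cK K (x' :: tauAux K (resetStep K x) (resetStep K x') d) =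
      cKAux K (resetStep K x') (tauAux K (resetStep K x) (resetStep K x') d) := by
    simp [cK, cKAux, zero_add]
  rw [hck, hck', ht']
  exact regEq_add_tauStep K (regEq_cKAux K d hy) t

end IRTA
end
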